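/- For the polynomial W(x,y) = x^{4m+4}y^{4m+4}(x⁴−y⁴)^{4m}(x⁸+14x⁴y⁴+y⁸) with m a nonnegative integer, every coefficient of x^i y^{24m+16−i} with i ≡ 0 (mod 4) and 4m+4 ≤ i ≤ 20m+12 is nonzero, provided m ≤ 163. -/
import Mathlib


open MvPolynomial

noncomputable abbrev Wpoly (m : ℕ) : MvPolynomial (Fin 2) ℚ :=
  (X 0)^(4 * m + 4) * (X 1)^(4 * m + 4) * ((X 0)^4 - (X 1)^4)^(4 * m)
    * ((X 0)^8 + 14 * (X 0)^4 * (X 1)^4 + (X 1)^8)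

lemma single_pair_eq (p q a b : ℕ) :
    (Finsupp.single (0 : Fin 2) p + Finsupp.single (1 : Fin 2) q
      = Finsupp.single (0 : Fin 2) a + Finsupp.single (1 : Fin 2) b) ↔ (p = a ∧ q = b) := by
  constructor
  · intro h
    have h0 := DFunLike.congr_fun h 0
    have h1 := DFunLike.congr_fun h 1
    simp [Finsupp.single_apply] at h0 h1
    exact ⟨h0, h1⟩
  · rintro ⟨rfl, rfl⟩; rfl

lemma coeff_pair (a b p q : ℕ) (c : ℚ) :
    coeff (Finsupp.single (0 : Fin 2) a + Finsupp.single (1 : Fin 2) b)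
      (C c * ((X 0) ^ p * (X 1) ^ q) : MvPolynomial (Fin 2) ℚ)
    = if p = a ∧ q = b then c else 0 := by
  rw [X_pow_eq_monomial, X_pow_eq_monomial, monomial_mul, mul_one, C_mul_monomial, mul_one,
    coeff_monomial, if_congr (single_pair_eq p q a b) rfl rfl]

lemma term_eq (m t s : ℕ) (ht : t ≤ 4 * m) (hs : 4 * m - t = s) :
    ((X 0 : MvPolynomial (Fin 2) ℚ) ^ (4 * m + 4) * (X 1) ^ (4 * m + 4)
        * ((-1) ^ (t + 4 * m) * ((X 0) ^ 4) ^ t * ((X 1) ^ 4) ^ (4 * m - t)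
            * ((4 * m).choose t : MvPolynomial (Fin 2) ℚ))
        * ((X 0) ^ 8 + 14 * (X 0) ^ 4 * (X 1) ^ 4 + (X 1) ^ 8))
    = C ((-1) ^ t * ((4 * m).choose t) : ℚ)
        * ((X 0) ^ (4 * m + 12 + 4 * t) * (X 1) ^ (20 * m + 4 - 4 * t))
      + C (14 * ((-1) ^ t * ((4 * m).choose t)) : ℚ)
        * ((X 0) ^ (4 * m + 8 + 4 * t) * (X 1) ^ (20 * m + 8 - 4 * t))
      + C ((-1) ^ t * ((4 * m).choose t) : ℚ)
        * ((X 0) ^ (4 * m + 4 + 4 * t) * (X 1) ^ (20 * m + 12 - 4 * t)) := by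
  rw [show 20 * m + 4 - 4 * t = 4 * s + (4 * m + 4) by omega,
    show 20 * m + 8 - 4 * t = 4 * s + (4 * m + 8) by omega,
    show 20 * m + 12 - 4 * t = 4 * s + (4 * m + 12) by omega, hs]
  have hsign : ((-1 : MvPolynomial (Fin 2) ℚ)) ^ (t + 4 * m) = (-1) ^ t := by
    rw [pow_add, show 4 * m = 2 * (2 * m) by ring, pow_mul]
    norm_num
  rw [hsign]
  simp only [map_mul, map_pow, map_neg, map_one, map_natCast, map_ofNat]
  ring

lemma coeff_W (m a b : ℕ) :
    coeff (Finsupp.single (0 : Fin 2) a + Finsupp.single (1 : Fin 2) b) (Wpoly m)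
    = ∑ t ∈ Finset.range (4 * m + 1),
        (((-1) ^ t * ((4 * m).choose t) : ℚ)
            * (if 4 * m + 12 + 4 * t = a ∧ 20 * m + 4 - 4 * t = b then 1 else 0)
          + 14 * ((-1) ^ t * ((4 * m).choose t) : ℚ)
            * (if 4 * m + 8 + 4 * t = a ∧ 20 * m + 8 - 4 * t = b then 1 else 0)
          + ((-1) ^ t * ((4 * m).choose t) : ℚ)
            * (if 4 * m + 4 + 4 * t = a ∧ 20 * m + 12 - 4 * t = b then 1 else 0)) := by
  have hW : Wpoly m = ∑ t ∈ Finset.range (4 * m + 1),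
      ((X 0 : MvPolynomial (Fin 2) ℚ) ^ (4 * m + 4) * (X 1) ^ (4 * m + 4)
        * ((-1) ^ (t + 4 * m) * ((X 0) ^ 4) ^ t * ((X 1) ^ 4) ^ (4 * m - t)
            * ((4 * m).choose t : MvPolynomial (Fin 2) ℚ))
        * ((X 0) ^ 8 + 14 * (X 0) ^ 4 * (X 1) ^ 4 + (X 1) ^ 8)) := by
    rw [Wpoly, sub_pow, Finset.mul_sum, Finset.sum_mul]
  rw [hW, coeff_sum]
  refine Finset.sum_congr rfl fun t ht => ?_
  rw [Finset.mem_range] at ht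
  rw [term_eq m t (4 * m - t) (by omega) rfl, coeff_add, coeff_add, coeff_pair, coeff_pair,
    coeff_pair]
  simp only [mul_ite, ite_mul, mul_one, mul_zero, zero_mul, one_mul]

lemma sum_shift (n d k : ℕ) (f : ℕ → ℚ) :
    (∑ t ∈ Finset.range n, (if t + d = k then f t else 0))
    = if d ≤ k ∧ k - d < n then f (k - d) else 0 := by
  by_cases h : d ≤ k ∧ k - d < n
  · rw [if_pos h, Finset.sum_eq_single (k - d)]
    · rw [if_pos (by omega)]
    · intro t ht hne
      rw [if_neg (by omega)]
    · intro habs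
      exact absurd (Finset.mem_range.2 h.2) habs
  · rw [if_neg h]
    refine Finset.sum_eq_zero fun t ht => ?_
    rw [Finset.mem_range] at ht
    rw [if_neg (by omega)]

lemma main_ne (n r : ℕ) (m : ℕ) (hn : n = 4 * m) (hr : r + 2 ≤ n) :
    ((n.choose r : ℤ) - 14 * n.choose (r + 1) + n.choose (r + 2)) ≠ 0 := by
  intro hN
  have h1 : (n.choose (r + 1) : ℤ) * (r + 1) = n.choose r * ((n : ℤ) - r) := by
    have := Nat.choose_succ_right_eq n r
    zify [show r ≤ n by omega] at this
    linear_combination this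
  have h2 : (n.choose (r + 2) : ℤ) * (r + 2) = n.choose (r + 1) * ((n : ℤ) - (r + 1)) := by
    have := Nat.choose_succ_right_eq n (r + 1)
    zify [show r + 1 ≤ n by omega] at this
    linear_combination this
  have key : (n.choose r : ℤ) * (((n : ℤ) - r) * ((n : ℤ) - r - 1)
      - 14 * ((n : ℤ) - r) * (r + 2) + (r + 1) * (r + 2)) = 0 := by
    linear_combination ((r : ℤ) + 1) * ((r : ℤ) + 2) * hN
      + (14 * ((r : ℤ) + 2) - ((n : ℤ) - r - 1)) * h1 - ((r : ℤ) + 1) * h2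
  have hA : (0 : ℤ) < n.choose r := by exact_mod_cast Nat.choose_pos (by omega : r ≤ n)
  have hf : ((n : ℤ) - r) * ((n : ℤ) - r - 1)
      - 14 * ((n : ℤ) - r) * (r + 2) + (r + 1) * (r + 2) = 0 := by
    rcases mul_eq_zero.1 key with h | h
    · exact absurd h (by positivity)
    · exact h
  subst hn
  set s : ℤ := (r : ℤ) + 2 - (2 * m + 1) with hsdef
  have h16 : 16 * (s * s) = (4 * (m : ℤ) + 2) * (12 * (m : ℤ) + 7) := by
    rw [hsdef]
    push_cast at hf ⊢
    linear_combination hf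
  obtain ⟨u, hu⟩ : ∃ u, s * s = u := ⟨_, rfl⟩
  obtain ⟨v, hv⟩ : ∃ v, (m : ℤ) * m = v := ⟨_, rfl⟩
  have hfin : 16 * u = 48 * v + 52 * (m : ℤ) + 14 := by
    rw [← hu, ← hv]; linear_combination h16
  omega

theorem stmt_18 (m : ℕ) (hm : m ≤ 163) (i : ℕ) (h4 : i % 4 = 0)
    (h1 : 4 * m + 4 ≤ i) (h2 : i ≤ 20 * m + 12) :
    MvPolynomial.coeff
      (Finsupp.single (0 : Fin 2) i + Finsupp.single (1 : Fin 2) (24 * m + 16 - i))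
      (Wpoly m) ≠ 0 := by
  obtain ⟨k, rfl⟩ : ∃ k, i = 4 * m + 4 + 4 * k := ⟨(i - (4 * m + 4)) / 4, by omega⟩
  have hk : k ≤ 4 * m + 2 := by omega
  rw [show 24 * m + 16 - (4 * m + 4 + 4 * k) = 20 * m + 12 - 4 * k by omega]
  rw [coeff_W]
  have hrw : ∀ t ∈ Finset.range (4 * m + 1),
      (((-1) ^ t * ((4 * m).choose t) : ℚ)
          * (if 4 * m + 12 + 4 * t = 4 * m + 4 + 4 * k ∧ 20 * m + 4 - 4 * t = 20 * m + 12 - 4 * k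
              then 1 else 0)
        + 14 * ((-1) ^ t * ((4 * m).choose t) : ℚ)
          * (if 4 * m + 8 + 4 * t = 4 * m + 4 + 4 * k ∧ 20 * m + 8 - 4 * t = 20 * m + 12 - 4 * k
              then 1 else 0)
        + ((-1) ^ t * ((4 * m).choose t) : ℚ)
          * (if 4 * m + 4 + 4 * t = 4 * m + 4 + 4 * k ∧ 20 * m + 12 - 4 * t = 20 * m + 12 - 4 * k
              then 1 else 0))
      = ((if t + 2 = k then ((-1) ^ t * ((4 * m).choose t) : ℚ) else 0)
        + (if t + 1 = k then 14 * ((-1) ^ t * ((4 * m).choose t) : ℚ) else 0)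
        + (if t + 0 = k then ((-1) ^ t * ((4 * m).choose t) : ℚ) else 0)) := by
    intro t ht
    rw [Finset.mem_range] at ht
    have c1 : (4 * m + 12 + 4 * t = 4 * m + 4 + 4 * k ∧ 20 * m + 4 - 4 * t = 20 * m + 12 - 4 * k)
        ↔ t + 2 = k := by omega
    have c2 : (4 * m + 8 + 4 * t = 4 * m + 4 + 4 * k ∧ 20 * m + 8 - 4 * t = 20 * m + 12 - 4 * k)
        ↔ t + 1 = k := by omega
    have c3 : (4 * m + 4 + 4 * t = 4 * m + 4 + 4 * k ∧ 20 * m + 12 - 4 * t = 20 * m + 12 - 4 * k)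
        ↔ t + 0 = k := by omega
    rw [if_congr c1 rfl rfl, if_congr c2 rfl rfl, if_congr c3 rfl rfl]
    simp only [mul_ite, mul_one, mul_zero]
  rw [Finset.sum_congr rfl hrw, Finset.sum_add_distrib, Finset.sum_add_distrib,
    sum_shift, sum_shift, sum_shift]
  rcases Nat.lt_or_ge k 1 with hk0 | hk1
  · -- k = 0
    interval_cases k
    norm_num
  rcases Nat.lt_or_ge k 2 with hk1' | hk2
  · -- k = 1
    interval_cases k
    rcases Nat.eq_zero_or_pos m with rfl | hm1
    · norm_num
    · rw [if_neg (by omega), if_pos (by omega), if_pos (by omega)]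
      norm_num [Nat.choose_one_right]
      intro habs
      have hq : (4 * m : ℚ) = 14 := by linarith
      have hn : (4 * m : ℕ) = 14 := by exact_mod_cast hq
      omega
  rcases Nat.lt_or_ge (4 * m) k with hbig | hmid
  · -- k = 4m+1 or 4m+2
    rcases Nat.lt_or_ge k (4 * m + 2) with hc | hc
    · -- k = 4m+1, and m ≥ 1 since k ≥ 2
      have hm1 : 1 ≤ m := by omega
      have hkk : k = 4 * m + 1 := by omega
      subst hkk
      rw [if_pos (by omega), if_pos (by omega), if_neg (by omega)]
      rw [show 4 * m + 1 - 2 = 4 * m - 1 by omega, show 4 * m + 1 - 1 = 4 * m by omega]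
      have e1 : (4 * m).choose (4 * m - 1) = 4 * m := by
        have hsymm := Nat.choose_symm (show 1 ≤ 4 * m by omega)
        rw [hsymm, Nat.choose_one_right]
      have e2 : ((-1 : ℚ)) ^ (4 * m - 1) = -1 := by
        have hodd : Odd (4 * m - 1) := by
          rcases Nat.even_or_odd (4 * m - 1) with h | h
          · exfalso; rcases h with ⟨c, hc2⟩; omega
          · exact h
        exact hodd.neg_one_pow
      have e3 : ((-1 : ℚ)) ^ (4 * m) = 1 := by
        rw [show 4 * m = 2 * (2 * m) by ring, pow_mul]; norm_num
      rw [e1, e2, e3, Nat.choose_self]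
      push_cast
      intro habs
      have hq : (4 * m : ℚ) = 14 := by linarith
      have hn : (4 * m : ℕ) = 14 := by exact_mod_cast hq
      omega
    · -- k = 4m+2
      have hkk : k = 4 * m + 2 := by omega
      subst hkk
      rw [if_pos (by omega), if_neg (by omega), if_neg (by omega)]
      rw [show 4 * m + 2 - 2 = 4 * m by omega]
      have e3 : ((-1 : ℚ)) ^ (4 * m) = 1 := by
        rw [show 4 * m = 2 * (2 * m) by ring, pow_mul]; norm_num
      rw [e3, Nat.choose_self]
      norm_num
  · -- 2 ≤ k ≤ 4m : the main case
    rw [if_pos (by omega), if_pos (by omega), if_pos (by omega)]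
    obtain ⟨r, rfl⟩ : ∃ r, k = r + 2 := ⟨k - 2, by omega⟩
    rw [show r + 2 - 2 = r by omega, show r + 2 - 1 = r + 1 by omega, Nat.sub_zero]
    have hmain := main_ne (4 * m) r m rfl (by omega)
    intro habs
    apply hmain
    have hfac : (-1 : ℚ) ^ r * (((4 * m).choose r : ℚ)
        - 14 * ((4 * m).choose (r + 1) : ℚ) + ((4 * m).choose (r + 2) : ℚ)) = 0 := by
      linear_combination habs
    have hq : ((4 * m).choose r : ℚ) - 14 * ((4 * m).choose (r + 1) : ℚ)
        + ((4 * m).choose (r + 2) : ℚ) = 0 := by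
      rcases mul_eq_zero.1 hfac with h | h
      · exact absurd h (pow_ne_zero _ (by norm_num))
      · exact h
    exact_mod_cast hq
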